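/- Let ρ be a quantum state on ℂ^d (positive semidefinite with trace 1) and let Π₁, …, Π_N be orthogonal projections on ℂ^d. Then ‖ ρ − √(Π₁ ⋯ Π_N ⋯ Π₁) ρ √(Π₁ ⋯ Π_N ⋯ Π₁) ‖₁ ≤ 2√2 · ( Σ_{i=1}^{N} Tr{(I − Π_i) ρ} )^{1/4}, where √(Π₁ ⋯ Π_N ⋯ Π₁) is the positive semidefinite square root of Π₁ Π₂ ⋯ Π_N ⋯ Π₂ Π₁. -/

import Mathlib

open Matrix ComplexOrder

/-- The positive semidefinite square root, as defined in older Mathlib (since removed). -/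
noncomputable def Matrix.PosSemidef.sqrt {n 𝕜 : Type*} [Fintype n] [RCLike 𝕜] [DecidableEq n]
    {A : Matrix n n 𝕜} (hA : A.PosSemidef) : Matrix n n 𝕜 :=
  (hA.1.eigenvectorUnitary : Matrix n n 𝕜) * diagonal ((↑) ∘ (√·) ∘ hA.1.eigenvalues) *
    (star hA.1.eigenvectorUnitary : Matrix n n 𝕜)

/-- The trace norm `‖A‖₁ = Tr √(A† A)` of a complex matrix. -/
noncomputable def traceNorm {n : Type*} [Fintype n] [DecidableEq n]
    (A : Matrix n n ℂ) : ℝ :=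
  (Matrix.posSemidef_conjTranspose_mul_self A).sqrt.trace.re

set_option linter.unusedSectionVars false
set_option maxHeartbeats 1000000
variable {n : Type*} [Fintype n] [DecidableEq n]

section SqrtPort
open scoped MatrixOrder

lemma Matrix.PosSemidef.sqrt_eq_cfcSqrt {A : Matrix n n ℂ} (hA : A.PosSemidef) :
    hA.sqrt = CFC.sqrt A := by
  rw [CFC.sqrt_eq_real_sqrt A (Matrix.nonneg_iff_posSemidef.mpr hA), cfcₙ_eq_cfc, hA.1.cfc_eq]
  simp [Matrix.PosSemidef.sqrt, Matrix.IsHermitian.cfc, Unitary.conjStarAlgAut_apply, Function.comp_def]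

lemma Matrix.PosSemidef.posSemidef_sqrt {A : Matrix n n ℂ} (hA : A.PosSemidef) :
    hA.sqrt.PosSemidef := by
  rw [hA.sqrt_eq_cfcSqrt]
  exact Matrix.nonneg_iff_posSemidef.mp (CFC.sqrt_nonneg A)

lemma Matrix.PosSemidef.sqrt_mul_self {A : Matrix n n ℂ} (hA : A.PosSemidef) :
    hA.sqrt * hA.sqrt = A := by
  rw [hA.sqrt_eq_cfcSqrt]
  exact CFC.sqrt_mul_sqrt_self A (Matrix.nonneg_iff_posSemidef.mpr hA)

lemma Matrix.PosSemidef.eq_sqrt_of_sq_eq {A : Matrix n n ℂ} (hA : A.PosSemidef)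
    {B : Matrix n n ℂ} (hB : B.PosSemidef) (hAB : A ^ 2 = B) : A = hB.sqrt := by
  rw [hB.sqrt_eq_cfcSqrt]
  exact (CFC.sqrt_unique (by rw [← pow_two]; exact hAB) (Matrix.nonneg_iff_posSemidef.mpr hA)).symm

end SqrtPort

lemma trace_re_nonneg_of_psd {A : Matrix n n ℂ} (hA : A.PosSemidef) : 0 ≤ A.trace.re := by
  have : ∀ i, 0 ≤ (A i i).re := by
    intro i
    have := hA.re_dotProduct_nonneg (Pi.single i 1)
    simpa [dotProduct, mulVec, Pi.single_apply, Finset.sum_ite_eq, mul_comm] using this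
  simpa [Matrix.trace, Matrix.diag, Complex.re_sum] using Finset.sum_nonneg fun i _ => this i

lemma trace_mul_re_nonneg {A B : Matrix n n ℂ} (hA : A.PosSemidef) (hB : B.PosSemidef) :
    0 ≤ (A * B).trace.re := by
  have h1 : A * B = hA.sqrt * hA.sqrt * B := by rw [hA.sqrt_mul_self]
  have h2 : (hA.sqrt * hA.sqrt * B).trace = (hA.sqrt * B * hA.sqrt).trace :=
    (Matrix.trace_mul_cycle hA.sqrt B hA.sqrt).symm
  have h3 : (hA.sqrt * B * hA.sqrt).PosSemidef := by
    have := hB.conjTranspose_mul_mul_same hA.sqrt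
    rwa [hA.posSemidef_sqrt.1.eq] at this
  rw [h1, h2]
  exact trace_re_nonneg_of_psd h3

lemma trace_mono {A B ρ : Matrix n n ℂ} (hAB : (A - B).PosSemidef) (hρ : ρ.PosSemidef) :
    (B * ρ).trace.re ≤ (A * ρ).trace.re := by
  have h := trace_mul_re_nonneg hAB hρ
  rw [Matrix.sub_mul, Matrix.trace_sub] at h
  simp only [Complex.sub_re] at h
  linarith

lemma sub_sq_psd {T : Matrix n n ℂ} (hT : T.PosSemidef)
    (hT1 : ((1 : Matrix n n ℂ) - T).PosSemidef) : (T - T * T).PosSemidef := by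
  obtain ⟨s, hsh, hs⟩ : ∃ s : Matrix n n ℂ, sᴴ = s ∧ s * s = T :=
    ⟨hT.sqrt, hT.posSemidef_sqrt.1.eq, hT.sqrt_mul_self⟩
  have h := hT1.conjTranspose_mul_mul_same s
  have key : sᴴ * ((1 : Matrix n n ℂ) - T) * s = T - T * T := by
    rw [hsh, ← hs]
    noncomm_ring
  rwa [key] at h

lemma proj_psd {Q : Matrix n n ℂ} (hQ : Q.IsHermitian) (hQ2 : Q * Q = Q) : Q.PosSemidef := by
  have : Q = Qᴴ * Q := by rw [hQ.eq, hQ2]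
  rw [this]
  exact Matrix.posSemidef_conjTranspose_mul_self Q

lemma one_sub_proj {Q : Matrix n n ℂ} (hQ : Q.IsHermitian) (hQ2 : Q * Q = Q) :
    ((1 : Matrix n n ℂ) - Q).PosSemidef := by
  have hh : ((1 : Matrix n n ℂ) - Q).IsHermitian := Matrix.isHermitian_one.sub hQ
  have h2 : ((1 : Matrix n n ℂ) - Q) * ((1 : Matrix n n ℂ) - Q) = 1 - Q := by
    rw [mul_sub, sub_mul, sub_mul, hQ2, one_mul, mul_one]
    noncomm_ring
  exact proj_psd hh h2

lemma sen {ρ : Matrix n n ℂ} (hρ : ρ.PosSemidef) (L : List (Matrix n n ℂ))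
    (hL : ∀ Q ∈ L, Q.IsHermitian ∧ Q * Q = Q) :
    (((1 : Matrix n n ℂ) - L.prod)ᴴ * ((1 : Matrix n n ℂ) - L.prod) * ρ).trace.re
      ≤ (L.map fun Q => (((1 : Matrix n n ℂ) - Q) * ρ).trace.re).sum := by
  induction L with
  | nil => simp
  | cons Q L' ih =>
      obtain ⟨hQ, hQ2⟩ := hL Q (List.mem_cons_self)
      have hL' := fun R hR => hL R (List.mem_cons_of_mem Q hR)
      set T := L'.prod with hT
      have e1 : ((1 : Matrix n n ℂ) - Q * T)ᴴ = 1 - Tᴴ * Q := by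
        rw [Matrix.conjTranspose_sub, Matrix.conjTranspose_one, Matrix.conjTranspose_mul, hQ.eq]
      have hQQ : Tᴴ * Q * (Q * T) = Tᴴ * Q * T := by
        rw [← mul_assoc, mul_assoc Tᴴ Q Q, hQ2]
      have key : ((1 : Matrix n n ℂ) - Q * T)ᴴ * ((1 : Matrix n n ℂ) - Q * T)
          = ((1 : Matrix n n ℂ) - Q) + ((1 : Matrix n n ℂ) - T)ᴴ * Q * ((1 : Matrix n n ℂ) - T) := by
        rw [e1]
        calc ((1 : Matrix n n ℂ) - Tᴴ * Q) * (1 - Q * T)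
            = 1 - Q * T - Tᴴ * Q + Tᴴ * Q * (Q * T) := by noncomm_ring
          _ = 1 - Q * T - Tᴴ * Q + Tᴴ * Q * T := by rw [hQQ]
          _ = _ := by rw [Matrix.conjTranspose_sub, Matrix.conjTranspose_one]; noncomm_ring
      rw [List.prod_cons, key, Matrix.add_mul, Matrix.trace_add, List.map_cons, List.sum_cons]
      simp only [Complex.add_re]
      have step : (((1 : Matrix n n ℂ) - T)ᴴ * Q * ((1 : Matrix n n ℂ) - T) * ρ).trace.re
          ≤ (L'.map fun Q => (((1 : Matrix n n ℂ) - Q) * ρ).trace.re).sum := by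
        set A := (1 : Matrix n n ℂ) - T with hA
        have c1 : (Aᴴ * Q * A * ρ).trace = (Q * (A * ρ * Aᴴ)).trace := by
          calc (Aᴴ * Q * A * ρ).trace = (Aᴴ * (Q * (A * ρ))).trace := by
                simp only [Matrix.mul_assoc]
            _ = ((Q * (A * ρ)) * Aᴴ).trace := Matrix.trace_mul_comm _ _
            _ = (Q * (A * ρ * Aᴴ)).trace := by simp only [Matrix.mul_assoc]
        have hσ : (A * ρ * Aᴴ).PosSemidef := hρ.mul_mul_conjTranspose_same A
        have c2 : (Q * (A * ρ * Aᴴ)).trace.re ≤ ((1 : Matrix n n ℂ) * (A * ρ * Aᴴ)).trace.re :=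
          trace_mono (one_sub_proj hQ hQ2) hσ
        have c3 : ((1 : Matrix n n ℂ) * (A * ρ * Aᴴ)).trace = (Aᴴ * A * ρ).trace := by
          rw [Matrix.one_mul]
          exact Matrix.trace_mul_cycle A ρ Aᴴ
        calc (Aᴴ * Q * A * ρ).trace.re = (Q * (A * ρ * Aᴴ)).trace.re := by rw [c1]
          _ ≤ ((1 : Matrix n n ℂ) * (A * ρ * Aᴴ)).trace.re := c2
          _ = (Aᴴ * A * ρ).trace.re := by rw [c3]
          _ ≤ _ := ih hL'
      linarith [step]


noncomputable def matE (M : Matrix n n ℂ) : EuclideanSpace ℂ (n × n) :=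
  (WithLp.equiv 2 _).symm (fun p => M p.1 p.2)

lemma trace_eq_inner (M N : Matrix n n ℂ) :
    (Mᴴ * N).trace = (inner ℂ (matE M) (matE N) : ℂ) := by
  rw [PiLp.inner_apply]
  simp only [matE, WithLp.equiv_symm_apply, PiLp.toLp_apply, RCLike.inner_apply]
  rw [Fintype.sum_prod_type]
  simp only [Matrix.trace, Matrix.diag, Matrix.mul_apply, Matrix.conjTranspose_apply]
  rw [Finset.sum_comm]
  exact Finset.sum_congr rfl fun _ _ => Finset.sum_congr rfl fun _ _ => mul_comm _ _

lemma trace_cs (A B : Matrix n n ℂ) :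
    ‖(Aᴴ * B).trace‖ ≤ Real.sqrt (Aᴴ * A).trace.re * Real.sqrt (Bᴴ * B).trace.re := by
  have h := norm_inner_le_norm (𝕜 := ℂ) (matE A) (matE B)
  rw [trace_eq_inner]
  rw [trace_eq_inner, trace_eq_inner]
  have hA : ‖matE A‖ = Real.sqrt (RCLike.re (inner (𝕜 := ℂ) (matE A) (matE A))) :=
    norm_eq_sqrt_re_inner _
  have hB : ‖matE B‖ = Real.sqrt (RCLike.re (inner (𝕜 := ℂ) (matE B) (matE B))) :=
    norm_eq_sqrt_re_inner _
  calc ‖(inner ℂ (matE A) (matE B) : ℂ)‖ ≤ ‖matE A‖ * ‖matE B‖ := h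
  _ = _ := by rw [hA, hB]; rfl


noncomputable def vecE (x : n → ℂ) : EuclideanSpace ℂ n := (WithLp.equiv 2 _).symm x

lemma dot_re_eq (x y : n → ℂ) :
    (star x ⬝ᵥ y).re = RCLike.re (inner (𝕜 := ℂ) (vecE x) (vecE y)) := by
  rw [PiLp.inner_apply]
  simp [vecE, dotProduct, RCLike.inner_apply, WithLp.equiv_symm_apply, mul_comm]

lemma herm_dot_im_zero {H : Matrix n n ℂ} (hH : H.IsHermitian) (x : n → ℂ) :
    (star x ⬝ᵥ H *ᵥ x).im = 0 := by
  have h : star (star x ⬝ᵥ H *ᵥ x) = star x ⬝ᵥ H *ᵥ x := by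
    conv_lhs => rw [star_dotProduct]
    rw [star_star, star_mulVec, ← dotProduct_mulVec, hH.eq]
  have := congrArg Complex.im h
  simp only [Complex.star_def, Complex.conj_im] at this
  linarith

lemma one_sub_psd {A : Matrix n n ℂ} (hA : A.IsHermitian)
    (h : ∀ x : n → ℂ, (star x ⬝ᵥ A *ᵥ x).re ≤ (star x ⬝ᵥ x).re) :
    ((1 : Matrix n n ℂ) - A).PosSemidef := by
  have hherm : ((1 : Matrix n n ℂ) - A).IsHermitian := (Matrix.isHermitian_one).sub hA
  refine Matrix.PosSemidef.of_dotProduct_mulVec_nonneg hherm fun x => ?_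
  have him : (star x ⬝ᵥ ((1 : Matrix n n ℂ) - A) *ᵥ x).im = 0 := herm_dot_im_zero hherm x
  have hre : 0 ≤ (star x ⬝ᵥ ((1 : Matrix n n ℂ) - A) *ᵥ x).re := by
    rw [Matrix.sub_mulVec, dotProduct_sub]
    simp only [Matrix.one_mulVec, Complex.sub_re]
    linarith [h x]
  rw [Complex.le_def]
  simpa using ⟨hre, him.symm⟩

lemma psd_contraction_of_sq {S : Matrix n n ℂ} (hS : S.PosSemidef)
    (h : ∀ x : n → ℂ, (star x ⬝ᵥ (S * S) *ᵥ x).re ≤ (star x ⬝ᵥ x).re) :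
    ∀ x : n → ℂ, (star x ⬝ᵥ S *ᵥ x).re ≤ (star x ⬝ᵥ x).re := by
  intro x
  have hsx : star (S *ᵥ x) ⬝ᵥ (S *ᵥ x) = star x ⬝ᵥ (S * S) *ᵥ x := by
    rw [star_mulVec, ← dotProduct_mulVec, mulVec_mulVec, hS.1.eq]
  have hnormsq : ‖vecE (S *ᵥ x)‖ ^ 2 ≤ ‖vecE x‖ ^ 2 := by
    rw [← inner_self_eq_norm_sq (𝕜 := ℂ), ← inner_self_eq_norm_sq (𝕜 := ℂ),
      ← dot_re_eq, ← dot_re_eq, hsx]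
    exact h x
  have hnorm : ‖vecE (S *ᵥ x)‖ ≤ ‖vecE x‖ := by
    have := Real.sqrt_le_sqrt hnormsq
    rwa [Real.sqrt_sq (norm_nonneg _), Real.sqrt_sq (norm_nonneg _)] at this
  calc (star x ⬝ᵥ S *ᵥ x).re = RCLike.re (inner (𝕜 := ℂ) (vecE x) (vecE (S *ᵥ x))) :=
        dot_re_eq _ _
    _ ≤ ‖(inner (𝕜 := ℂ) (vecE x) (vecE (S *ᵥ x)) : ℂ)‖ := RCLike.re_le_norm _
    _ ≤ ‖vecE x‖ * ‖vecE (S *ᵥ x)‖ := norm_inner_le_norm _ _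
    _ ≤ ‖vecE x‖ * ‖vecE x‖ := by
        exact mul_le_mul_of_nonneg_left hnorm (norm_nonneg _)
    _ = ‖vecE x‖ ^ 2 := by ring
    _ = (star x ⬝ᵥ x).re := by
        rw [← inner_self_eq_norm_sq (𝕜 := ℂ), ← dot_re_eq]


-- a projection is a contraction
lemma proj_contraction {Q : Matrix n n ℂ} (hQ : Q.IsHermitian) (hQ2 : Q * Q = Q)
    (y : n → ℂ) : (star (Q *ᵥ y) ⬝ᵥ (Q *ᵥ y)).re ≤ (star y ⬝ᵥ y).re := by
  have key : star (Q *ᵥ y) ⬝ᵥ (Q *ᵥ y) = star y ⬝ᵥ (Q *ᵥ y) := by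
    rw [star_mulVec, ← dotProduct_mulVec, mulVec_mulVec, hQ.eq, hQ2]
  have h1 : ‖vecE (Q *ᵥ y)‖ ^ 2 ≤ ‖vecE y‖ * ‖vecE (Q *ᵥ y)‖ := by
    rw [← inner_self_eq_norm_sq (𝕜 := ℂ), ← dot_re_eq, key, dot_re_eq]
    calc RCLike.re (inner (𝕜 := ℂ) (vecE y) (vecE (Q *ᵥ y)))
        ≤ ‖(inner (𝕜 := ℂ) (vecE y) (vecE (Q *ᵥ y)) : ℂ)‖ := RCLike.re_le_norm _
      _ ≤ _ := norm_inner_le_norm _ _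
  have h2 : ‖vecE (Q *ᵥ y)‖ ≤ ‖vecE y‖ := by
    rcases eq_or_lt_of_le (norm_nonneg (vecE (Q *ᵥ y))) with h | h
    · rw [← h]; exact norm_nonneg _
    · nlinarith
  calc (star (Q *ᵥ y) ⬝ᵥ (Q *ᵥ y)).re = ‖vecE (Q *ᵥ y)‖ ^ 2 := by
        rw [dot_re_eq, inner_self_eq_norm_sq (𝕜 := ℂ)]
    _ ≤ ‖vecE y‖ ^ 2 := by nlinarith [norm_nonneg (vecE y)]
    _ = (star y ⬝ᵥ y).re := by rw [dot_re_eq, inner_self_eq_norm_sq (𝕜 := ℂ)]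

lemma prod_contraction (L : List (Matrix n n ℂ))
    (h : ∀ Q ∈ L, Q.IsHermitian ∧ Q * Q = Q) (x : n → ℂ) :
    (star (L.prod *ᵥ x) ⬝ᵥ (L.prod *ᵥ x)).re ≤ (star x ⬝ᵥ x).re := by
  induction L with
  | nil => simp
  | cons Q L' ih =>
      have hQ := h Q (List.mem_cons_self)
      have hL' := fun R hR => h R (List.mem_cons_of_mem Q hR)
      rw [List.prod_cons, ← Matrix.mulVec_mulVec]
      exact (proj_contraction hQ.1 hQ.2 _).trans (ih hL')


lemma traceNorm_herm_repr {X : Matrix n n ℂ} (hX : X.IsHermitian) :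
    ∃ C : Matrix n n ℂ, C.IsHermitian ∧ C * C = 1 ∧ traceNorm X = ((C * X).trace).re := by
  set U : Matrix n n ℂ := (hX.eigenvectorUnitary : Matrix n n ℂ) with hUdef
  have hU1 : star U * U = 1 := Matrix.mem_unitaryGroup_iff'.mp hX.eigenvectorUnitary.2
  have hU2 : U * star U = 1 := Matrix.mem_unitaryGroup_iff.mp hX.eigenvectorUnitary.2
  set lam := hX.eigenvalues with hlam
  have hspec : X = U * Matrix.diagonal (RCLike.ofReal ∘ lam) * star U := hX.spectral_theorem
  have mulU : ∀ f g : n → ℂ, (U * Matrix.diagonal f * star U) * (U * Matrix.diagonal g * star U)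
      = U * Matrix.diagonal (fun i => f i * g i) * star U := by
    intro f g
    rw [← Matrix.diagonal_mul_diagonal]
    calc (U * Matrix.diagonal f * star U) * (U * Matrix.diagonal g * star U)
        = U * Matrix.diagonal f * (star U * U) * Matrix.diagonal g * star U := by
          simp only [Matrix.mul_assoc]
      _ = U * (Matrix.diagonal f * Matrix.diagonal g) * star U := by
          rw [hU1]; simp only [Matrix.mul_one, Matrix.mul_assoc]
  have traceU : ∀ f : n → ℂ, (U * Matrix.diagonal f * star U).trace = ∑ i, f i := by
    intro f
    rw [Matrix.trace_mul_cycle, hU1, Matrix.one_mul, Matrix.trace_diagonal]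
  set sgn : n → ℝ := fun i => if lam i < 0 then -1 else 1 with hsgn
  set C : Matrix n n ℂ := U * Matrix.diagonal (fun i => (sgn i : ℂ)) * star U with hC
  have hCherm : C.IsHermitian := by
    rw [hC, Matrix.IsHermitian]
    rw [Matrix.conjTranspose_mul, Matrix.conjTranspose_mul, Matrix.diagonal_conjTranspose]
    simp only [Matrix.star_eq_conjTranspose, Matrix.conjTranspose_conjTranspose]
    have : star (fun i => (sgn i : ℂ)) = fun i => (sgn i : ℂ) := by
      funext i; simp [Complex.conj_ofReal]
    rw [this, Matrix.mul_assoc]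
  have hCC : C * C = 1 := by
    rw [hC, mulU]
    have : (fun i => (sgn i : ℂ) * (sgn i : ℂ)) = fun _ => (1 : ℂ) := by
      funext i
      simp only [hsgn]
      split <;> norm_num
    rw [this]
    simp [Matrix.diagonal_one, hU2, Matrix.mul_one]
  have hCX : (C * X).trace = ∑ i, ((sgn i * lam i : ℝ) : ℂ) := by
    rw [hC]
    conv_lhs => rw [hspec]
    rw [mulU, traceU]
    congr 1; funext i
    simp [Function.comp]
  -- the square root of XᴴX
  set R : Matrix n n ℂ := U * Matrix.diagonal (fun i => ((|lam i| : ℝ) : ℂ)) * star U with hR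
  have hRpsd : R.PosSemidef := by
    have hd : (Matrix.diagonal (fun i => ((|lam i| : ℝ) : ℂ))).PosSemidef := by
      rw [Matrix.posSemidef_diagonal_iff]
      intro i
      exact_mod_cast Complex.zero_le_real.mpr (abs_nonneg (lam i))
    have := hd.mul_mul_conjTranspose_same U
    rwa [hR, Matrix.star_eq_conjTranspose]
  have hR2 : R ^ 2 = Xᴴ * X := by
    rw [pow_two, hR, mulU, hX.eq]
    conv_rhs => rw [hspec]
    rw [mulU]
    have harg : (fun i => ((|lam i| : ℝ) : ℂ) * ((|lam i| : ℝ) : ℂ))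
        = (fun i => (RCLike.ofReal ∘ lam) i * (RCLike.ofReal ∘ lam) i) := by
      funext i
      simp only [Function.comp]
      norm_cast
      exact congrArg Complex.ofReal (abs_mul_abs_self (lam i))
    rw [harg]
  have hsqrt : R = (Matrix.posSemidef_conjTranspose_mul_self X).sqrt :=
    hRpsd.eq_sqrt_of_sq_eq _ hR2
  refine ⟨C, hCherm, hCC, ?_⟩
  rw [traceNorm, ← hsqrt, hR, traceU, hCX]
  rw [Complex.re_sum, Complex.re_sum]
  congr 1; funext i
  simp only [Complex.ofReal_re]
  rcases lt_or_ge (lam i) 0 with h | h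
  · rw [abs_of_neg h, hsgn]; simp [h]
  · rw [abs_of_nonneg h, hsgn]; simp [not_lt.mpr h]


lemma gentle {ρ S : Matrix n n ℂ} (hρ : ρ.PosSemidef) (hρ1 : ρ.trace = 1)
    (hS : S.PosSemidef) (hS1 : ((1 : Matrix n n ℂ) - S).PosSemidef) :
    traceNorm (ρ - S * ρ * S) ≤ 2 * Real.sqrt ((((1 : Matrix n n ℂ) - S) * ρ).trace.re) := by
  have hρtr : ρ.trace.re = 1 := by rw [hρ1]; simp
  set T1 : Matrix n n ℂ := 1 - S with hT1
  set T2 : Matrix n n ℂ := 1 + S with hT2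
  have hT1h : T1ᴴ = T1 := hS1.1.eq
  have hT2h : T2ᴴ = T2 := by
    rw [hT2, Matrix.conjTranspose_add, Matrix.conjTranspose_one, hS.1.eq]
  have hXherm : (ρ - S * ρ * S).IsHermitian := by
    refine hρ.1.sub ?_
    rw [Matrix.IsHermitian, Matrix.conjTranspose_mul, Matrix.conjTranspose_mul, hρ.1.eq,
      hS.1.eq, Matrix.mul_assoc]
  obtain ⟨C, hCh, hCC, hrepr⟩ := traceNorm_herm_repr hXherm
  obtain ⟨r, hrh, hr⟩ : ∃ r : Matrix n n ℂ, rᴴ = r ∧ r * r = ρ :=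
    ⟨hρ.sqrt, hρ.posSemidef_sqrt.1.eq, hρ.sqrt_mul_self⟩
  set B : Matrix n n ℂ := T1 * ρ * T2 with hB
  have hBH : Bᴴ = T2 * ρ * T1 := by
    rw [hB, Matrix.conjTranspose_mul, Matrix.conjTranspose_mul, hρ.1.eq, hT1h, hT2h,
      Matrix.mul_assoc]
  -- step 1 : trace (C * X) = re trace (C * B)
  have hsum : B + Bᴴ = (ρ - S * ρ * S) + (ρ - S * ρ * S) := by
    rw [hBH, hB, hT1, hT2]
    noncomm_ring
  have htr2 : (C * B).trace + (C * Bᴴ).trace = (C * (ρ - S * ρ * S)).trace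
      + (C * (ρ - S * ρ * S)).trace := by
    have := congrArg (fun M => (C * M).trace) hsum
    simpa only [Matrix.mul_add, Matrix.trace_add] using this
  have hconj : (C * Bᴴ).trace = star ((C * B).trace) := by
    have h1 : (C * Bᴴ)ᴴ = B * C := by
      rw [Matrix.conjTranspose_mul, Matrix.conjTranspose_conjTranspose, hCh.eq]
    have h2 : ((C * Bᴴ)ᴴ).trace = star ((C * Bᴴ).trace) := Matrix.trace_conjTranspose _
    rw [h1] at h2
    have h3 := congrArg star h2
    rw [star_star] at h3
    rw [← h3, Matrix.trace_mul_comm]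
  have hXB : (C * (ρ - S * ρ * S)).trace.re = ((C * B).trace).re := by
    have := congrArg Complex.re htr2
    simp only [Complex.add_re, hconj, Complex.star_def, Complex.conj_re] at this
    linarith
  -- step 2 : Cauchy-Schwarz
  set A1 : Matrix n n ℂ := r * (T1 * C) with hA1
  set A2 : Matrix n n ℂ := r * T2 with hA2
  have hA1H : A1ᴴ = C * T1 * r := by
    rw [hA1, Matrix.conjTranspose_mul, Matrix.conjTranspose_mul, hrh, hT1h, hCh.eq,
      Matrix.mul_assoc]
  have heq : A1ᴴ * A2 = C * B := by
    rw [hA1H, hA2, hB]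
    calc C * T1 * r * (r * T2) = C * (T1 * (r * r * T2)) := by simp only [Matrix.mul_assoc]
      _ = C * (T1 * ρ * T2) := by rw [hr]; simp only [Matrix.mul_assoc]
  have hcs := trace_cs A1 A2
  rw [heq] at hcs
  -- step 3 : bounds on the two Gram traces
  have hg0 : 0 ≤ (T1 * ρ).trace.re := trace_mul_re_nonneg hS1 hρ
  have hsub : (T1 - T1 * T1).PosSemidef := by
    apply sub_sq_psd hS1
    rw [hT1, sub_sub_cancel]
    exact hS
  have hGram1 : (A1ᴴ * A1).trace.re ≤ (T1 * ρ).trace.re := by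
    have e1 : A1ᴴ * A1 = C * (T1 * (ρ * (T1 * C))) := by
      rw [hA1H, hA1]
      calc C * T1 * r * (r * (T1 * C)) = C * (T1 * (r * r * (T1 * C))) := by
            simp only [Matrix.mul_assoc]
        _ = _ := by rw [hr]
    have e2 : (C * (T1 * (ρ * (T1 * C)))).trace = (T1 * T1 * ρ).trace := by
      calc (C * (T1 * (ρ * (T1 * C)))).trace
          = ((C * (T1 * (ρ * T1))) * C).trace := by simp only [Matrix.mul_assoc]
        _ = (C * (C * (T1 * (ρ * T1)))).trace := by rw [Matrix.trace_mul_comm]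
        _ = ((C * C) * (T1 * (ρ * T1))).trace := by simp only [Matrix.mul_assoc]
        _ = (T1 * (ρ * T1)).trace := by rw [hCC, Matrix.one_mul]
        _ = (T1 * ρ * T1).trace := by simp only [Matrix.mul_assoc]
        _ = (T1 * T1 * ρ).trace := Matrix.trace_mul_cycle T1 ρ T1
    rw [e1, e2]
    exact trace_mono hsub hρ
  have hGram2 : (A2ᴴ * A2).trace.re ≤ 4 := by
    have e1 : A2ᴴ * A2 = T2 * (ρ * T2) := by
      rw [hA2, Matrix.conjTranspose_mul, hrh, hT2h]
      calc T2 * r * (r * T2) = T2 * (r * r * T2) := by simp only [Matrix.mul_assoc]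
        _ = T2 * (ρ * T2) := by rw [hr]
    have e2 : (T2 * (ρ * T2)).trace = (T2 * T2 * ρ).trace := by
      calc (T2 * (ρ * T2)).trace = (T2 * ρ * T2).trace := by simp only [Matrix.mul_assoc]
        _ = (T2 * T2 * ρ).trace := Matrix.trace_mul_cycle T2 ρ T2
    have hid : (4 : Matrix n n ℂ) - T2 * T2 = T1 + (S - S * S) + (T1 + T1) := by
      have h4 : (4 : Matrix n n ℂ) = 1 + 1 + 1 + 1 := by norm_num
      rw [hT1, hT2, h4]; noncomm_ring
    have hpsd4 : ((4 : Matrix n n ℂ) - T2 * T2).PosSemidef := by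
      rw [hid]
      exact ((hS1.add (sub_sq_psd hS (hT1 ▸ hS1))).add (hS1.add hS1))
    have hmono := trace_mono hpsd4 hρ
    have h4 : ((4 : Matrix n n ℂ) * ρ).trace.re = 4 := by
      have : (4 : Matrix n n ℂ) * ρ = ρ + ρ + ρ + ρ := by noncomm_ring
      rw [this]
      simp only [Matrix.trace_add, Complex.add_re, hρtr]
      norm_num
    rw [e1, e2]
    rw [h4] at hmono
    exact hmono
  -- step 4 : conclude
  have b1 : Real.sqrt ((A1ᴴ * A1).trace.re) ≤ Real.sqrt ((T1 * ρ).trace.re) :=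
    Real.sqrt_le_sqrt hGram1
  have b2 : Real.sqrt ((A2ᴴ * A2).trace.re) ≤ 2 := by
    have h := Real.sqrt_le_sqrt hGram2
    have : Real.sqrt 4 = 2 := by
      rw [show (4 : ℝ) = 2 ^ 2 by norm_num, Real.sqrt_sq (by norm_num : (0:ℝ) ≤ 2)]
    linarith [h, this.le]
  calc traceNorm (ρ - S * ρ * S) = (C * (ρ - S * ρ * S)).trace.re := hrepr
    _ = ((C * B).trace).re := hXB
    _ ≤ ‖(C * B).trace‖ := Complex.re_le_norm _
    _ ≤ Real.sqrt ((A1ᴴ * A1).trace.re) * Real.sqrt ((A2ᴴ * A2).trace.re) := hcs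
    _ ≤ Real.sqrt ((T1 * ρ).trace.re) * 2 := by
        exact mul_le_mul b1 b2 (Real.sqrt_nonneg _) (Real.sqrt_nonneg _)
    _ = 2 * Real.sqrt ((T1 * ρ).trace.re) := mul_comm _ _

/-- **Gentle sequential measurement via the polar decomposition.**
For a quantum state `ρ` and orthogonal projections `Π₁, …, Π_N` on `ℂ^d`,
`‖ρ − √(Π₁ ⋯ Π_N ⋯ Π₁) ρ √(Π₁ ⋯ Π_N ⋯ Π₁)‖₁ ≤ 2 √2 (∑ᵢ Tr ((I − Πᵢ) ρ))^{1/4}`,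
where `√(Π₁ ⋯ Π_N ⋯ Π₁)` is the positive semidefinite square root of
`Π₁ ⋯ Π_N ⋯ Π₁ = (Π_N ⋯ Π₁)† (Π_N ⋯ Π₁)`. -/
theorem gentle_sequential_polar {d N : ℕ}
    (ρ : Matrix (Fin d) (Fin d) ℂ) (hρ : ρ.PosSemidef) (hρtr : ρ.trace = 1)
    (P : Fin N → Matrix (Fin d) (Fin d) ℂ)
    (hherm : ∀ i, (P i).IsHermitian) (hproj : ∀ i, P i * P i = P i) :
    traceNorm (ρ
        - (Matrix.posSemidef_conjTranspose_mul_self ((List.ofFn P).reverse.prod)).sqrt * ρ *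
            (Matrix.posSemidef_conjTranspose_mul_self ((List.ofFn P).reverse.prod)).sqrt)
      ≤ 2 * Real.sqrt 2 *
          (∑ i, (((1 : Matrix (Fin d) (Fin d) ℂ) - P i) * ρ).trace.re) ^ ((1 : ℝ) / 4) := by
  have hρtrre : ρ.trace.re = 1 := by rw [hρtr]; simp
  set L : List (Matrix (Fin d) (Fin d) ℂ) := (List.ofFn P).reverse with hLdef
  set M : Matrix (Fin d) (Fin d) ℂ := L.prod with hMdef
  have hLmem : ∀ Q ∈ L, Q.IsHermitian ∧ Q * Q = Q := by
    intro Q hQ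
    rw [hLdef, List.mem_reverse, List.mem_ofFn] at hQ
    obtain ⟨i, rfl⟩ := hQ
    exact ⟨hherm i, hproj i⟩
  set S : Matrix (Fin d) (Fin d) ℂ := (Matrix.posSemidef_conjTranspose_mul_self M).sqrt
    with hSdef
  have hS : S.PosSemidef := (Matrix.posSemidef_conjTranspose_mul_self M).posSemidef_sqrt
  have hSS : S * S = Mᴴ * M := (Matrix.posSemidef_conjTranspose_mul_self M).sqrt_mul_self
  -- contraction property of M
  have hconM : ∀ x : Fin d → ℂ, (star x ⬝ᵥ (Mᴴ * M) *ᵥ x).re ≤ (star x ⬝ᵥ x).re := by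
    intro x
    have h := prod_contraction L hLmem x
    rwa [show star (L.prod *ᵥ x) ⬝ᵥ (L.prod *ᵥ x) = star x ⬝ᵥ (Mᴴ * M) *ᵥ x from by
      rw [star_mulVec, ← dotProduct_mulVec, mulVec_mulVec]] at h
  have hMM1 : ((1 : Matrix (Fin d) (Fin d) ℂ) - Mᴴ * M).PosSemidef :=
    one_sub_psd (Matrix.posSemidef_conjTranspose_mul_self M).1 hconM
  have hconS : ∀ x : Fin d → ℂ, (star x ⬝ᵥ S *ᵥ x).re ≤ (star x ⬝ᵥ x).re :=
    psd_contraction_of_sq hS (by intro x; rw [hSS]; exact hconM x)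
  have hS1 : ((1 : Matrix (Fin d) (Fin d) ℂ) - S).PosSemidef := one_sub_psd hS.1 hconS
  -- the gentle bound
  have hg := gentle hρ hρtr hS hS1
  -- quantities
  set g : ℝ := (((1 : Matrix (Fin d) (Fin d) ℂ) - S) * ρ).trace.re with hgdef
  set t : ℝ := (Mᴴ * M * ρ).trace.re with htdef
  set rr : ℝ := ((M * ρ).trace).re with hrrdef
  set dl : ℝ := (((1 : Matrix (Fin d) (Fin d) ℂ) - M)ᴴ
      * ((1 : Matrix (Fin d) (Fin d) ℂ) - M) * ρ).trace.re with hdldef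
  set ε : ℝ := ∑ i, (((1 : Matrix (Fin d) (Fin d) ℂ) - P i) * ρ).trace.re with hedef
  have ht0 : 0 ≤ t := by
    rw [htdef]
    exact trace_mul_re_nonneg (Matrix.posSemidef_conjTranspose_mul_self M) hρ
  have hδ0 : 0 ≤ dl := by
    rw [hdldef]
    exact trace_mul_re_nonneg (Matrix.posSemidef_conjTranspose_mul_self _) hρ
  have hδε : dl ≤ ε := by
    have h := sen hρ L hLmem
    have hsum : (L.map fun Q => (((1 : Matrix (Fin d) (Fin d) ℂ) - Q) * ρ).trace.re).sum = ε := by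
      rw [hLdef, List.map_reverse, List.sum_reverse, List.map_ofFn, List.sum_ofFn]
      rfl
    rw [hsum] at h
    exact h
  -- dl = 1 - 2 rr + t
  have hMρre : ((Mᴴ * ρ).trace).re = rr := by
    have h1 : (Mᴴ * ρ)ᴴ = ρ * M := by
      rw [Matrix.conjTranspose_mul, Matrix.conjTranspose_conjTranspose, hρ.1.eq]
    have h2 : ((Mᴴ * ρ)ᴴ).trace = star ((Mᴴ * ρ).trace) := Matrix.trace_conjTranspose _
    rw [h1] at h2
    have h3 := congrArg Complex.re h2
    simp only [Complex.star_def, Complex.conj_re] at h3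
    rw [hrrdef, Matrix.trace_mul_comm M ρ]
    exact h3.symm
  have hδeq : dl = 1 - 2 * rr + t := by
    have hd1 : ((1 : Matrix (Fin d) (Fin d) ℂ) - M)ᴴ * ((1 : Matrix (Fin d) (Fin d) ℂ) - M) * ρ
        = ρ - M * ρ - Mᴴ * ρ + Mᴴ * M * ρ := by
      rw [Matrix.conjTranspose_sub, Matrix.conjTranspose_one]
      noncomm_ring
    rw [hdldef, hd1]
    simp only [Matrix.trace_sub, Matrix.trace_add, Complex.sub_re, Complex.add_re]
    rw [hρtrre]
    rw [← hrrdef, ← htdef] at *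
    have := hMρre
    linarith [hMρre]
  -- rr bounds
  obtain ⟨rt, hrth, hrt2⟩ : ∃ rt : Matrix (Fin d) (Fin d) ℂ, rtᴴ = rt ∧ rt * rt = ρ :=
    ⟨hρ.sqrt, hρ.posSemidef_sqrt.1.eq, hρ.sqrt_mul_self⟩
  have hrabs : |rr| ≤ Real.sqrt t := by
    have hcs := trace_cs rt (M * rt)
    have e1 : rtᴴ * (M * rt) = rt * (M * rt) := by rw [hrth]
    have e2 : (rt * (M * rt)).trace = (M * ρ).trace := by
      calc (rt * (M * rt)).trace = ((M * rt) * rt).trace := Matrix.trace_mul_comm _ _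
        _ = (M * (rt * rt)).trace := by simp only [Matrix.mul_assoc]
        _ = (M * ρ).trace := by rw [hrt2]
    have e3 : (rtᴴ * rt).trace = ρ.trace := by rw [hrth, hrt2]
    have e4 : ((M * rt)ᴴ * (M * rt)).trace = (Mᴴ * M * ρ).trace := by
      rw [Matrix.conjTranspose_mul, hrth]
      calc (rt * Mᴴ * (M * rt)).trace = (rt * (Mᴴ * (M * rt))).trace := by
            simp only [Matrix.mul_assoc]
        _ = ((Mᴴ * (M * rt)) * rt).trace := Matrix.trace_mul_comm _ _
        _ = (Mᴴ * M * (rt * rt)).trace := by simp only [Matrix.mul_assoc]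
        _ = (Mᴴ * M * ρ).trace := by rw [hrt2]
    rw [e1, e2, e3, e4, hρtr] at hcs
    simp only [Complex.one_re, Real.sqrt_one, one_mul] at hcs
    calc |rr| = |((M * ρ).trace).re| := by rw [hrrdef]
      _ ≤ ‖(M * ρ).trace‖ := Complex.abs_re_le_norm _
      _ ≤ Real.sqrt t := hcs
  have hrr2 : rr ^ 2 ≤ t := by
    have := sq_abs rr ▸ pow_le_pow_left₀ (abs_nonneg rr) hrabs 2
    calc rr ^ 2 = |rr| ^ 2 := (sq_abs rr).symm
      _ ≤ Real.sqrt t ^ 2 := pow_le_pow_left₀ (abs_nonneg rr) hrabs 2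
      _ = t := Real.sq_sqrt ht0
  have ht1 : t ≤ 1 := by
    have h := trace_mono hMM1 hρ
    rwa [Matrix.one_mul, hρtrre] at h
  have hrr1 : rr ≤ 1 := by
    calc rr ≤ |rr| := le_abs_self rr
      _ ≤ Real.sqrt t := hrabs
      _ ≤ Real.sqrt 1 := Real.sqrt_le_sqrt ht1
      _ = 1 := Real.sqrt_one
  -- g ≤ 1 - t
  have hgt : g ≤ 1 - t := by
    have h1 : ((S * S) * ρ).trace.re ≤ (S * ρ).trace.re := trace_mono (sub_sq_psd hS hS1) hρ
    have h2 : (S * S) * ρ = Mᴴ * M * ρ := by rw [hSS]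
    rw [h2] at h1
    have h3 : g = 1 - (S * ρ).trace.re := by
      rw [hgdef, Matrix.sub_mul, Matrix.trace_sub, Matrix.one_mul]
      simp only [Complex.sub_re, hρtrre]
    rw [h3, ← htdef] at *
    linarith [h1]
  -- 1 - t ≤ 2 √ε
  have hε0 : 0 ≤ ε := le_trans hδ0 hδε
  have honer : 1 - rr ≤ Real.sqrt ε := by
    have h1 : (1 - rr) ^ 2 ≤ dl := by rw [hδeq]; nlinarith [hrr2]
    have h2 : 1 - rr ≤ Real.sqrt dl := by
      have := Real.sqrt_le_sqrt h1
      rwa [Real.sqrt_sq (by linarith [hrr1])] at this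
    exact h2.trans (Real.sqrt_le_sqrt hδε)
  have h1t : 1 - t ≤ 2 * Real.sqrt ε := by
    have : 1 - t = 2 * (1 - rr) - dl := by rw [hδeq]; ring
    rw [this]
    linarith [honer, hδ0]
  -- conclude
  have hg0 : 0 ≤ g := trace_mul_re_nonneg hS1 hρ
  have hgε : g ≤ 2 * Real.sqrt ε := le_trans hgt h1t
  have hfinal : 2 * Real.sqrt g ≤ 2 * Real.sqrt 2 * ε ^ ((1 : ℝ) / 4) := by
    have h1 : Real.sqrt g ≤ Real.sqrt (2 * Real.sqrt ε) := Real.sqrt_le_sqrt hgε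
    have h2 : Real.sqrt (2 * Real.sqrt ε) = Real.sqrt 2 * Real.sqrt (Real.sqrt ε) :=
      Real.sqrt_mul (by norm_num) _
    have h3 : Real.sqrt (Real.sqrt ε) = ε ^ ((1 : ℝ) / 4) := by
      rw [Real.sqrt_eq_rpow, Real.sqrt_eq_rpow, ← Real.rpow_mul hε0]
      norm_num
    rw [h2, h3] at h1
    nlinarith [h1]
  exact le_trans hg hfinal
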